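/- For 0 < r < 1 and c ∈ [−1/r, 1/r], the function (1 + c x)·k(x:r) on (−r, r) is a probability density, i.e., it is nonnegative on (−r,r) and integrates to 1. -/

import Mathlib

open Real

private lemma konno_hasDerivAt (r c : ℝ) (hr0 : 0 < r) (hr1 : r < 1) (x : ℝ)
    (hx : x ∈ Set.Ioo (-r) r) :
    HasDerivAt (fun y : ℝ =>
        (Real.arcsin (y * Real.sqrt (1 - r^2) / (r * Real.sqrt (1 - y^2)))
          - c * Real.arctan (Real.sqrt (r^2 - y^2) / Real.sqrt (1 - r^2))) / Real.pi)
      ((1 + c * x) * (Real.sqrt (1 - r^2) / (Real.pi * (1 - x^2) * Real.sqrt (r^2 - x^2)))) x := by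
  obtain ⟨hx1, hx2⟩ := hx
  have hr2 : 0 < 1 - r^2 := by nlinarith
  set s := Real.sqrt (1 - r^2) with hs
  have hs0 : 0 < s := Real.sqrt_pos.mpr hr2
  have hssq : s^2 = 1 - r^2 := Real.sq_sqrt hr2.le
  have hxr : x^2 < r^2 := by nlinarith
  have h1x : 0 < 1 - x^2 := by nlinarith
  have hrx : 0 < r^2 - x^2 := by nlinarith
  set q := Real.sqrt (1 - x^2) with hqdef
  set p := Real.sqrt (r^2 - x^2) with hpdef
  have hq0 : 0 < q := Real.sqrt_pos.mpr h1x
  have hp0 : 0 < p := Real.sqrt_pos.mpr hrx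
  have hqsq : q^2 = 1 - x^2 := Real.sq_sqrt h1x.le
  have hpsq : p^2 = r^2 - x^2 := Real.sq_sqrt hrx.le
  have hinner1 : HasDerivAt (fun y : ℝ => 1 - y^2) (-(2 * x^(2-1))) x :=
    (hasDerivAt_pow 2 x).const_sub 1
  have hqder : HasDerivAt (fun y : ℝ => Real.sqrt (1 - y^2)) (1 / (2 * q) * -(2 * x^(2-1))) x :=
    (Real.hasDerivAt_sqrt h1x.ne').comp x hinner1
  have hnum : HasDerivAt (fun y : ℝ => y * s) s x := by
    simpa using (hasDerivAt_id x).mul_const s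
  have hden : HasDerivAt (fun y : ℝ => r * Real.sqrt (1 - y^2))
      (r * (1 / (2 * q) * -(2 * x^(2-1)))) x := hqder.const_mul r
  have hdenne : r * q ≠ 0 := by positivity
  have hphi : HasDerivAt (fun y : ℝ => y * s / (r * Real.sqrt (1 - y^2)))
      ((s * (r * q) - x * s * (r * (1 / (2 * q) * -(2 * x^(2-1))))) / (r * q)^2) x :=
    hnum.div hden hdenne
  set φ := x * s / (r * q) with hphidef
  have hphisq : φ^2 < 1 := by
    rw [hphidef, div_pow]
    rw [div_lt_one (by positivity)]
    have : (x*s)^2 = x^2 * (1 - r^2) := by rw [mul_pow, hssq]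
    rw [this, mul_pow, hqsq]
    nlinarith
  have habs : |φ| < 1 := (sq_lt_one_iff_abs_lt_one φ).mp hphisq
  have hne1 : φ ≠ -1 := by intro h; rw [h] at habs; simp at habs
  have hne2 : φ ≠ 1 := by intro h; rw [h] at habs; simp at habs
  have hsqrt1 : Real.sqrt (1 - φ^2) = p / (r * q) := by
    have h1 : 1 - φ^2 = (p / (r * q))^2 := by
      rw [hphidef, div_pow, div_pow, mul_pow, mul_pow, hssq, hqsq, hpsq]
      field_simp
      ring
    rw [h1, Real.sqrt_sq (by positivity)]
  have harcsin : HasDerivAt (fun y : ℝ => Real.arcsin (y * s / (r * Real.sqrt (1 - y^2))))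
      (1 / Real.sqrt (1 - φ^2) *
        ((s * (r * q) - x * s * (r * (1 / (2 * q) * -(2 * x^(2-1))))) / (r * q)^2)) x :=
    by have := (Real.hasDerivAt_arcsin hne1 hne2).comp x hphi; exact this
  have hinner2 : HasDerivAt (fun y : ℝ => r^2 - y^2) (-(2 * x^(2-1))) x :=
    (hasDerivAt_pow 2 x).const_sub (r^2)
  have hpder : HasDerivAt (fun y : ℝ => Real.sqrt (r^2 - y^2)) (1 / (2 * p) * -(2 * x^(2-1))) x :=
    (Real.hasDerivAt_sqrt hrx.ne').comp x hinner2
  have hpsider : HasDerivAt (fun y : ℝ => Real.sqrt (r^2 - y^2) / s)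
      (1 / (2 * p) * -(2 * x^(2-1)) / s) x := hpder.div_const s
  set ψ := p / s with hpsidef
  have harctan : HasDerivAt (fun y : ℝ => Real.arctan (Real.sqrt (r^2 - y^2) / s))
      (1 / (1 + ψ^2) * (1 / (2 * p) * -(2 * x^(2-1)) / s)) x :=
    by have := (Real.hasDerivAt_arctan ψ).comp x hpsider; exact this
  have hcomb := ((harcsin.sub (harctan.const_mul c)).div_const Real.pi)
  refine hcomb.congr_deriv ?_
  symm
  rw [hsqrt1, hpsidef]
  have h2 : (1:ℝ) + (p/s)^2 = q^2/s^2 := by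
    rw [div_pow, hpsq, hssq, hqsq]; field_simp; ring
  have h3 : s*(r*q) - x*s*(r*(1/(2*q) * -(2*x^(2-1)))) = s*r/q := by
    field_simp
    linear_combination hqsq
  rw [h2, h3, ← hqsq]
  have hpi := Real.pi_pos
  field_simp
  ring

theorem konno_asymmetric_density (r c : ℝ) (hr0 : 0 < r) (hr1 : r < 1)
    (hc : c ∈ Set.Icc (-(1/r)) (1/r)) :
    (∀ x ∈ Set.Ioo (-r) r,
      0 ≤ (1 + c * x) *
        (Real.sqrt (1 - r^2) / (Real.pi * (1 - x^2) * Real.sqrt (r^2 - x^2)))) ∧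
    ∫ x in (-r)..r,
      (1 + c * x) *
        (Real.sqrt (1 - r^2) / (Real.pi * (1 - x^2) * Real.sqrt (r^2 - x^2))) = 1 := by
  obtain ⟨hc1, hc2⟩ := hc
  have hr2 : 0 < 1 - r^2 := by nlinarith
  have hs0 : 0 < Real.sqrt (1 - r^2) := Real.sqrt_pos.mpr hr2
  have hssq : (Real.sqrt (1 - r^2))^2 = 1 - r^2 := Real.sq_sqrt hr2.le
  -- nonnegativity
  have hnn : ∀ x ∈ Set.Ioo (-r) r,
      0 ≤ (1 + c * x) *
        (Real.sqrt (1 - r^2) / (Real.pi * (1 - x^2) * Real.sqrt (r^2 - x^2))) := by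
    intro x hx
    obtain ⟨hx1, hx2⟩ := hx
    have h1x : 0 < 1 - x^2 := by nlinarith
    have hcx : 0 ≤ 1 + c * x := by
      have h1 : |c| ≤ 1/r := abs_le.mpr ⟨hc1, hc2⟩
      have h2 : |x| ≤ r := abs_le.mpr ⟨hx1.le, hx2.le⟩
      have h3 : |c * x| ≤ 1 := by
        rw [abs_mul]
        calc |c| * |x| ≤ (1/r) * r :=
              mul_le_mul h1 h2 (abs_nonneg _) (by positivity)
          _ = 1 := by field_simp
      nlinarith [abs_le.mp h3]
    have hpi := Real.pi_pos
    exact mul_nonneg hcx (by positivity)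
  refine ⟨hnn, ?_⟩
  -- the antiderivative
  set H : ℝ → ℝ := fun y =>
    (Real.arcsin (y * Real.sqrt (1 - r^2) / (r * Real.sqrt (1 - y^2)))
      - c * Real.arctan (Real.sqrt (r^2 - y^2) / Real.sqrt (1 - r^2))) / Real.pi with hH
  have hab : (-r : ℝ) ≤ r := by linarith
  have hcont : ContinuousOn H (Set.Icc (-r) r) := by
    apply ContinuousOn.div_const
    apply ContinuousOn.sub
    · apply Real.continuous_arcsin.comp_continuousOn
      apply ContinuousOn.div
      · exact (continuous_id.mul continuous_const).continuousOn
      · exact (continuous_const.mul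
          (Real.continuous_sqrt.comp (continuous_const.sub (continuous_pow 2)))).continuousOn
      · intro y hy
        obtain ⟨hy1, hy2⟩ := hy
        have : 0 < 1 - y^2 := by nlinarith
        have : 0 < Real.sqrt (1 - y^2) := Real.sqrt_pos.mpr this
        positivity
    · exact ((Real.continuous_arctan.comp
        ((Real.continuous_sqrt.comp (continuous_const.sub (continuous_pow 2))).div_const
          (Real.sqrt (1 - r^2)))).continuousOn).const_smul c
  have hderiv : ∀ x ∈ Set.Ioo (-r) r, HasDerivAt H
      ((1 + c * x) * (Real.sqrt (1 - r^2) / (Real.pi * (1 - x^2) * Real.sqrt (r^2 - x^2)))) x :=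
    fun x hx => konno_hasDerivAt r c hr0 hr1 x hx
  have hint : IntervalIntegrable (fun x =>
      (1 + c * x) * (Real.sqrt (1 - r^2) / (Real.pi * (1 - x^2) * Real.sqrt (r^2 - x^2))))
      MeasureTheory.volume (-r) r := by
    apply intervalIntegral.intervalIntegrable_deriv_of_nonneg
    · rwa [Set.uIcc_of_le hab]
    · rw [min_eq_left hab, max_eq_right hab]; exact hderiv
    · rw [min_eq_left hab, max_eq_right hab]; exact hnn
  rw [intervalIntegral.integral_eq_sub_of_hasDeriv_right_of_le hab hcont
    (fun x hx => (hderiv x hx).hasDerivWithinAt) hint]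
  -- evaluate H at the endpoints
  have hne : r * Real.sqrt (1 - r^2) ≠ 0 := by positivity
  have hHr : H r = (π/2) / π := by
    rw [hH]
    simp only
    rw [show r^2 - r^2 = 0 by ring, Real.sqrt_zero, zero_div, Real.arctan_zero, mul_zero, sub_zero]
    rw [div_self hne, Real.arcsin_one]
  have hHnr : H (-r) = (-(π/2)) / π := by
    rw [hH]
    simp only
    rw [show r^2 - (-r)^2 = 0 by ring, Real.sqrt_zero, zero_div, Real.arctan_zero, mul_zero,
      sub_zero, show (1:ℝ) - (-r)^2 = 1 - r^2 by ring]
    rw [show -r * Real.sqrt (1 - r^2) / (r * Real.sqrt (1 - r^2))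
        = -(r * Real.sqrt (1 - r^2) / (r * Real.sqrt (1 - r^2))) by ring]
    rw [div_self hne, Real.arcsin_neg_one]
  rw [hHr, hHnr]
  have hpi := Real.pi_ne_zero
  field_simp
  ring
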